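/- Let n ≥ 3, let F = ℚ(α) be the field of rational functions over ℚ in an indeterminate α, and in M_α(𝒜_n) over F let u = (1+α(n−2))⁻¹ Σ_{t ∈ T_{n−1}} t. Then the 1-eigenspace of ad(u) is exactly the span of T_{n−1}, and the 0-eigenspace of ad(u) is 1-dimensional. -/

import Mathlib

open Equiv Finsupp

instance {n : ℕ} : DecidablePred (Equiv.Perm.IsSwap : Equiv.Perm (Fin n) → Prop) := by
  intro σ; unfold Equiv.Perm.IsSwap; infer_instance

abbrev Tr (n : ℕ) : Type := {σ : Equiv.Perm (Fin (n + 1)) // σ.IsSwap}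

/-- Two transpositions are collinear when their supports share exactly one point. -/
def Coll {n : ℕ} (s t : Tr n) : Prop :=
  (s.1.support ∩ t.1.support).card = 1

instance {n : ℕ} (s t : Tr n) : Decidable (Coll s t) := by
  unfold Coll; infer_instance

/-- The third point `s·t·s` of the line through collinear transpositions. -/
def wedge {n : ℕ} (s t : Tr n) : Tr n :=
  ⟨s.1 * t.1 * s.1, by
    obtain ⟨x, y, hxy, ht⟩ := t.2
    obtain ⟨a, b, hab, hs⟩ := s.2
    have hinv : s.1⁻¹ = s.1 := by rw [hs]; exact Equiv.swap_inv a b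
    exact ⟨s.1 x, s.1 y, fun h => hxy (s.1.injective h), by
      rw [ht, Equiv.swap_apply_apply, hinv]⟩⟩

variable (F : Type*) [Field F]

/-- Product of two basis points of the Matsuo algebra of the Fischer
space `𝒜_n` of `Sym(n+1)`. -/
noncomputable def pointMul {n : ℕ} (α : F) (s t : Tr n) : Tr n →₀ F :=
  if s = t then Finsupp.single s 1
  else if Coll s t then
    (α / 2) • (Finsupp.single s 1 + Finsupp.single t 1 - Finsupp.single (wedge s t) 1)
  else 0

/-- The multiplication of the Matsuo algebra `M_α(𝒜_n)`, as a bilinear map on the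
free module on the transpositions of `Sym(n+1)`. -/
noncomputable def matsuoMul (n : ℕ) (α : F) :
    (Tr n →₀ F) →ₗ[F] (Tr n →₀ F) →ₗ[F] (Tr n →₀ F) :=
  Finsupp.lsum F fun s =>
    LinearMap.toSpanSingleton F _
      (Finsupp.lsum F fun t => LinearMap.toSpanSingleton F _ (pointMul F α s t))


/-- The identity element `(1 + α(n-2))⁻¹ ∑_{t ∈ T_{n-1}} t` of the parabolic subalgebra
of `M_α(𝒜_n)` spanned by the transpositions fixing the last point (i.e. with support
contained in `{1, …, n}`), over the rational function field `ℚ(α)`. -/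
noncomputable def idParab (n : ℕ) : Tr n →₀ RatFunc ℚ :=
  (1 + RatFunc.X * ((n : RatFunc ℚ) - 2))⁻¹ •
    ∑ t ∈ Finset.univ.filter (fun t : Tr n => t.1 (Fin.last n) = Fin.last n),
      Finsupp.single t (1 : RatFunc ℚ)


namespace MAux


instance : CharZero (RatFunc ℚ) :=
  charZero_of_injective_algebraMap (RatFunc.algebraMap_injective ℚ)


variable {n : ℕ}

def mkT (a b : Fin (n+1)) (h : a ≠ b) : Tr n := ⟨Equiv.swap a b, a, b, h, rfl⟩

lemma mkT_comm (a b : Fin (n+1)) (h : a ≠ b) : mkT a b h = mkT b a h.symm :=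
  Subtype.ext (Equiv.swap_comm a b)

lemma exists_mk (t : Tr n) : ∃ (a b : Fin (n+1)) (h : a ≠ b), t = mkT a b h := by
  obtain ⟨a, b, h, ht⟩ := t.2
  exact ⟨a, b, h, Subtype.ext ht⟩

lemma mkT_eq_iff {a b c d : Fin (n+1)} (h : a ≠ b) (h' : c ≠ d) :
    mkT a b h = mkT c d h' ↔ (a = c ∧ b = d) ∨ (a = d ∧ b = c) := by
  constructor
  · intro he
    have hv : Equiv.swap a b = Equiv.swap c d := congrArg Subtype.val he
    have h1 : Equiv.swap a b c = d := by rw [hv, Equiv.swap_apply_left]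
    rcases eq_or_ne c a with rfl | hca
    · rw [Equiv.swap_apply_left] at h1; exact Or.inl ⟨rfl, h1⟩
    · rcases eq_or_ne c b with rfl | hcb
      · rw [Equiv.swap_apply_right] at h1; exact Or.inr ⟨h1, rfl⟩
      · rw [Equiv.swap_apply_of_ne_of_ne hca hcb] at h1
        exact absurd h1 h'
  · rintro (⟨rfl, rfl⟩ | ⟨rfl, rfl⟩)
    · rfl
    · exact mkT_comm a b h

lemma mkT_support (a b : Fin (n+1)) (h : a ≠ b) : (mkT a b h).1.support = {a, b} :=
  Equiv.Perm.support_swap h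

lemma coll_mk_iff {a b c d : Fin (n+1)} (h : a ≠ b) (h' : c ≠ d) :
    Coll (mkT a b h) (mkT c d h') ↔ (({a, b} ∩ {c, d} : Finset (Fin (n+1))).card = 1) := by
  unfold Coll
  rw [mkT_support, mkT_support]

lemma fix_iff {a b : Fin (n+1)} (h : a ≠ b) :
    (mkT a b h).1 (Fin.last n) = Fin.last n ↔ a ≠ Fin.last n ∧ b ≠ Fin.last n := by
  show Equiv.swap a b (Fin.last n) = Fin.last n ↔ _
  constructor
  · intro he
    rcases eq_or_ne a (Fin.last n) with rfl | ha
    · rw [Equiv.swap_apply_left] at he; exact absurd he.symm h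
    rcases eq_or_ne b (Fin.last n) with rfl | hb
    · rw [Equiv.swap_apply_right] at he; exact absurd he h
    exact ⟨ha, hb⟩
  · rintro ⟨ha, hb⟩
    exact Equiv.swap_apply_of_ne_of_ne (Ne.symm ha) (Ne.symm hb)

lemma coll_ne {s t : Tr n} (hc : Coll s t) : s ≠ t := by
  rintro rfl
  obtain ⟨a, b, h, rfl⟩ := exists_mk s
  unfold Coll at hc
  rw [mkT_support, Finset.inter_self] at hc
  rw [show ({a,b} : Finset (Fin (n+1))).card = 2 from by
    rw [Finset.card_insert_of_notMem (by simpa using h), Finset.card_singleton]] at hc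
  omega

lemma wedge_mk {a b c d : Fin (n+1)} (h : a ≠ b) (h' : c ≠ d) :
    wedge (mkT a b h) (mkT c d h') =
      mkT (Equiv.swap a b c) (Equiv.swap a b d) (fun he => h' ((Equiv.swap a b).injective he)) := by
  apply Subtype.ext
  show Equiv.swap a b * Equiv.swap c d * Equiv.swap a b = _
  have : Equiv.swap a b * Equiv.swap c d * Equiv.swap a b
      = Equiv.swap a b * Equiv.swap c d * (Equiv.swap a b)⁻¹ := by
    rw [Equiv.swap_inv]
  rw [this, ← Equiv.swap_apply_apply]
  rfl


local notation "K" => RatFunc ℚ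
local notation "L" => Fin.last n

lemma mkT_congr {a b a' b' : Fin (n+1)} (h : a ≠ b) (ha : a = a') (hb : b = b') :
    mkT a b h = mkT a' b' (ha ▸ hb ▸ h) := by subst ha; subst hb; rfl

lemma card_pair_inter_left (a : Fin (n+1)) {b c : Fin (n+1)} (hbc : b ≠ c) :
    (({a, b} ∩ {a, c} : Finset (Fin (n+1)))).card = 1 := by
  have : ({a, b} ∩ {a, c} : Finset (Fin (n+1))) = {a} := by
    ext u
    simp only [Finset.mem_inter, Finset.mem_insert, Finset.mem_singleton]
    constructor
    · rintro ⟨rfl | rfl, h2⟩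
      · rfl
      · rcases h2 with rfl | h2
        · rfl
        · exact (hbc h2).elim
    · rintro rfl; exact ⟨Or.inl rfl, Or.inl rfl⟩
  rw [this, Finset.card_singleton]

noncomputable def E (a b : Fin (n+1)) : Tr n →₀ K :=
  if h : a ≠ b then Finsupp.single (mkT a b h) 1 else 0

lemma E_self (a : Fin (n+1)) : E a a = (0 : Tr n →₀ K) := dif_neg (by simp)

lemma E_of_ne {a b : Fin (n+1)} (h : a ≠ b) : E a b = Finsupp.single (mkT a b h) 1 := dif_pos h

lemma E_comm (a b : Fin (n+1)) : E a b = E b a := by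
  rcases eq_or_ne a b with rfl | h
  · rfl
  · rw [E_of_ne h, E_of_ne (Ne.symm h), mkT_comm]

lemma E_apply_mk {a b u v : Fin (n+1)} (h : u ≠ v) :
    E a b (mkT u v h) = if (a = u ∧ b = v) ∨ (a = v ∧ b = u) then 1 else 0 := by
  rcases eq_or_ne a b with rfl | hab
  · rw [E_self]
    have hc : ¬((a = u ∧ a = v) ∨ (a = v ∧ a = u)) := by
      rintro (⟨rfl, rfl⟩ | ⟨rfl, rfl⟩) <;> exact h rfl
    rw [if_neg hc]
    rfl
  · rw [E_of_ne hab, Finsupp.single_apply]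
    simp only [mkT_eq_iff]

def Pfin (n : ℕ) : Finset (Tr n) :=
  Finset.univ.filter (fun t : Tr n => t.1 (Fin.last n) = Fin.last n)

lemma mem_Pfin {a b : Fin (n+1)} (h : a ≠ b) :
    mkT a b h ∈ Pfin n ↔ a ≠ L ∧ b ≠ L := by
  rw [Pfin, Finset.mem_filter, fix_iff]
  simp

noncomputable def Vv (n : ℕ) : Tr n →₀ K := ∑ a : Fin (n+1), E a (Fin.last n)

noncomputable def Rr (x : Fin (n+1)) : Tr n →₀ K :=
  ∑ c : Fin (n+1), if c = L then 0 else E x c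

noncomputable def ww (n : ℕ) : Tr n →₀ K := ∑ t ∈ Pfin n, Finsupp.single t 1

lemma pointMul_self (α : K) (s : Tr n) : pointMul K α s s = Finsupp.single s 1 := if_pos rfl

lemma pointMul_ne (α : K) {s t : Tr n} (hne : s ≠ t) :
    pointMul K α s t = if Coll s t then
      (α / 2) • (Finsupp.single s 1 + Finsupp.single t 1 - Finsupp.single (wedge s t) 1)
    else 0 := if_neg hne


lemma wedge_eq {a b c d u v : Fin (n+1)} (h : a ≠ b) (h' : c ≠ d) (hw : u ≠ v)
    (h1 : Equiv.swap a b c = u) (h2 : Equiv.swap a b d = v) :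
    wedge (mkT a b h) (mkT c d h') = mkT u v hw := by
  rw [wedge_mk]
  apply Subtype.ext
  show Equiv.swap (Equiv.swap a b c) (Equiv.swap a b d) = Equiv.swap u v
  rw [h1, h2]

lemma sumP_notP (hn : 1 ≤ n) {x : Fin (n+1)} (hx : x ≠ L) :
    ∑ t ∈ Pfin n, pointMul K RatFunc.X t (mkT x L hx) =
      (((RatFunc.X : K)/2)) •
        (Rr x + (n : K) • Finsupp.single (mkT x L hx) 1 - Vv n) := by
  set s : Tr n := mkT x L hx with hs
  have hsP : s ∉ Pfin n := by
    rw [hs, mem_Pfin]; tauto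
  have h1 : ∀ t ∈ Pfin n, pointMul K RatFunc.X t s =
      if Coll t s then (((RatFunc.X : K)/2)) • ((Finsupp.single t 1 : Tr n →₀ K) + Finsupp.single s 1
        - Finsupp.single (wedge t s) 1) else 0 :=
    fun t ht => pointMul_ne _ (by rintro rfl; exact hsP ht)
  rw [Finset.sum_congr rfl h1, ← Finset.sum_filter]
  have hmem : ∀ c ∈ Finset.univ \ ({x, L} : Finset (Fin (n+1))), c ≠ x ∧ c ≠ L := by
    intro c hc
    simpa [Finset.mem_sdiff] using hc
  have hbij : ∑ c ∈ Finset.univ \ ({x, L} : Finset (Fin (n+1))),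
        ((((RatFunc.X : K)/2)) • (E x c + Finsupp.single s 1 - E c L) : Tr n →₀ K)
      = ∑ t ∈ (Pfin n).filter (fun t => Coll t s),
        (((RatFunc.X : K)/2)) • ((Finsupp.single t 1 : Tr n →₀ K) + Finsupp.single s 1
          - Finsupp.single (wedge t s) 1) := by
    refine Finset.sum_bij (fun c hc => mkT x c (Ne.symm (hmem c hc).1)) ?_ ?_ ?_ ?_
    · intro c hc
      rw [Finset.mem_filter]
      refine ⟨(mem_Pfin _).2 ⟨hx, (hmem c hc).2⟩, ?_⟩
      rw [hs, coll_mk_iff]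
      exact card_pair_inter_left x (hmem c hc).2
    · intro c hc c' hc' he
      rcases (mkT_eq_iff _ _).1 he with ⟨-, h2⟩ | ⟨h2, -⟩
      · exact h2
      · exact absurd h2.symm (hmem c' hc').1
    · intro t ht
      rw [Finset.mem_filter] at ht
      obtain ⟨a, b, hab, rfl⟩ := exists_mk t
      obtain ⟨ha, hb⟩ := (mem_Pfin hab).1 ht.1
      have hcol := ht.2
      rw [hs, coll_mk_iff] at hcol
      obtain ⟨e, he⟩ := Finset.card_eq_one.1 hcol
      have hei : e ∈ ({a, b} : Finset (Fin (n+1))) ∧ e ∈ ({x, L} : Finset (Fin (n+1))) := by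
        have : e ∈ ({a, b} ∩ {x, L} : Finset (Fin (n+1))) := by
          rw [he]; exact Finset.mem_singleton_self e
        exact Finset.mem_inter.1 this
      have heab : e = a ∨ e = b := by simpa using hei.1
      have hex : e = x := by
        rcases (by simpa using hei.2 : e = x ∨ e = L) with h | h
        · exact h
        · rcases heab with rfl | rfl
          · exact absurd h ha
          · exact absurd h hb
      rcases heab with rfl | rfl
      · refine ⟨b, ?_, ?_⟩
        · simp only [Finset.mem_sdiff, Finset.mem_univ, true_and, Finset.mem_insert,
            Finset.mem_singleton]
          push_neg
          exact ⟨fun hbx => hab (hex ▸ hbx ▸ rfl), hb⟩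
        · subst hex; rfl
      · refine ⟨a, ?_, ?_⟩
        · simp only [Finset.mem_sdiff, Finset.mem_univ, true_and, Finset.mem_insert,
            Finset.mem_singleton]
          push_neg
          exact ⟨fun hax => hab (hax ▸ hex ▸ rfl), ha⟩
        · subst hex
          exact (mkT_comm a e hab).symm
    · intro c hc
      have hcx := (hmem c hc).1
      have hcL := (hmem c hc).2
      have hw : wedge (mkT x c (Ne.symm hcx)) s = mkT c L hcL := by
        rw [hs]
        refine wedge_eq _ _ _ (Equiv.swap_apply_left x c) ?_
        exact Equiv.swap_apply_of_ne_of_ne (Ne.symm hx) (Ne.symm hcL)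
      rw [hw, E_of_ne (Ne.symm hcx), E_of_ne hcL]
  rw [← hbij, ← Finset.smul_sum]
  congr 1
  rw [Finset.sum_sub_distrib, Finset.sum_add_distrib]
  have hA : ∑ c ∈ Finset.univ \ ({x, L} : Finset (Fin (n+1))), E x c = Rr x := by
    have : Rr x = ∑ c ∈ (Finset.univ : Finset (Fin (n+1))),
        if c = L then 0 else E x c := rfl
    rw [this, ← Finset.sum_sdiff (Finset.subset_univ ({x, L} : Finset (Fin (n+1))))]
    rw [Finset.sum_pair hx, if_neg hx, if_pos rfl, E_self, add_zero, add_zero]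
    exact Finset.sum_congr rfl fun c hc => (if_neg (hmem c hc).2).symm
  have hC : ∑ c ∈ Finset.univ \ ({x, L} : Finset (Fin (n+1))), E c L
      = Vv n - Finsupp.single s 1 := by
    have hV : Vv n = (∑ c ∈ Finset.univ \ ({x, L} : Finset (Fin (n+1))), E c L)
        + (E x L + E L L) := by
      rw [Vv, ← Finset.sum_sdiff (Finset.subset_univ ({x, L} : Finset (Fin (n+1)))),
        Finset.sum_pair hx]
    rw [hV, E_self, add_zero, E_of_ne hx, ← hs]
    abel
  have hB : ∑ _c ∈ Finset.univ \ ({x, L} : Finset (Fin (n+1))),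
      (Finsupp.single s 1 : Tr n →₀ K) = (n : K) • Finsupp.single s 1 - Finsupp.single s 1 := by
    rw [Finset.sum_const]
    have hcard : (Finset.univ \ ({x, L} : Finset (Fin (n+1)))).card = n - 1 := by
      rw [Finset.card_sdiff_of_subset (Finset.subset_univ _), Finset.card_pair hx]
      simp
    rw [hcard, ← Nat.cast_smul_eq_nsmul K, Nat.cast_sub hn]
    push_cast
    rw [sub_smul, one_smul]
  rw [hA, hB, hC]
  abel


lemma sumP_inP (hn : 2 ≤ n) {x y : Fin (n+1)} (hxy : x ≠ y) (hx : x ≠ L) (hy : y ≠ L) :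
    ∑ t ∈ Pfin n, pointMul K RatFunc.X t (mkT x y hxy) =
      (1 + RatFunc.X * ((n : K) - 2)) • Finsupp.single (mkT x y hxy) 1 := by
  set s : Tr n := mkT x y hxy with hs
  have hsP : s ∈ Pfin n := (mem_Pfin hxy).2 ⟨hx, hy⟩
  rw [← Finset.add_sum_erase _ _ hsP, pointMul_self]
  have h1 : ∀ t ∈ (Pfin n).erase s, pointMul K RatFunc.X t s =
      if Coll t s then ((RatFunc.X : K)/2) • ((Finsupp.single t 1 : Tr n →₀ K)
        + Finsupp.single s 1 - Finsupp.single (wedge t s) 1) else 0 :=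
    fun t ht => pointMul_ne _ (Finset.ne_of_mem_erase ht)
  rw [Finset.sum_congr rfl h1, ← Finset.sum_filter]
  set D : Finset (Fin (n+1) × Fin (n+1)) :=
    ({x, y} : Finset (Fin (n+1))) ×ˢ (Finset.univ \ ({x, y, L} : Finset (Fin (n+1)))) with hD
  have hmem : ∀ p ∈ D, (p.1 = x ∨ p.1 = y) ∧ p.2 ≠ x ∧ p.2 ≠ y ∧ p.2 ≠ L := by
    intro p hp
    rw [hD, Finset.mem_product] at hp
    constructor
    · simpa using hp.1
    · have := hp.2
      simp only [Finset.mem_sdiff, Finset.mem_univ, true_and, Finset.mem_insert,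
        Finset.mem_singleton] at this
      push_neg at this
      exact this
  have hne : ∀ p ∈ D, p.1 ≠ p.2 := by
    intro p hp
    rcases (hmem p hp).1 with h | h
    · rw [h]; exact Ne.symm (hmem p hp).2.1
    · rw [h]; exact Ne.symm (hmem p hp).2.2.1
  have hbij : ∑ p ∈ D.attach, (((RatFunc.X : K)/2) •
        (E p.1.1 p.1.2 + Finsupp.single s 1
          - E (Equiv.swap p.1.1 p.1.2 x) (Equiv.swap p.1.1 p.1.2 y)) : Tr n →₀ K)
      = ∑ t ∈ ((Pfin n).erase s).filter (fun t => Coll t s),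
        ((RatFunc.X : K)/2) • ((Finsupp.single t 1 : Tr n →₀ K)
          + Finsupp.single s 1 - Finsupp.single (wedge t s) 1) := by
    refine Finset.sum_bij (fun p _ => mkT p.1.1 p.1.2 (hne p.1 p.2)) ?_ ?_ ?_ ?_
    · intro p _
      obtain ⟨h1, h2, h3, h4⟩ := hmem p.1 p.2
      rw [Finset.mem_filter, Finset.mem_erase]
      refine ⟨⟨?_, (mem_Pfin _).2 ⟨?_, h4⟩⟩, ?_⟩
      · rw [hs]
        intro he
        rcases (mkT_eq_iff _ _).1 he with ⟨-, h5⟩ | ⟨-, h5⟩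
        · exact h3 h5
        · exact h2 h5
      · rcases h1 with h | h
        · rw [h]; exact hx
        · rw [h]; exact hy
      · rw [hs, coll_mk_iff]
        rcases h1 with h | h
        · rw [h]; exact card_pair_inter_left x h3
        · rw [h, Finset.pair_comm x y]; exact card_pair_inter_left y h2
    · intro p _ q _ he
      rcases (mkT_eq_iff _ _).1 he with ⟨h5, h6⟩ | ⟨h5, h6⟩
      · exact Subtype.ext (Prod.ext h5 h6)
      · exfalso
        rcases (hmem p.1 p.2).1 with h | h
        · exact (hmem q.1 q.2).2.1 (h ▸ h5.symm)
        · exact (hmem q.1 q.2).2.2.1 (h ▸ h5.symm)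
    · intro t ht
      rw [Finset.mem_filter, Finset.mem_erase] at ht
      obtain ⟨⟨hts, htP⟩, hcol⟩ := ht
      obtain ⟨a, b, hab, rfl⟩ := exists_mk t
      obtain ⟨ha, hb⟩ := (mem_Pfin hab).1 htP
      rw [hs, coll_mk_iff] at hcol
      obtain ⟨e, he⟩ := Finset.card_eq_one.1 hcol
      have hei : e ∈ ({a, b} : Finset (Fin (n+1))) ∧ e ∈ ({x, y} : Finset (Fin (n+1))) := by
        have : e ∈ ({a, b} ∩ {x, y} : Finset (Fin (n+1))) := by
          rw [he]; exact Finset.mem_singleton_self e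
        exact Finset.mem_inter.1 this
      have heab : e = a ∨ e = b := by simpa using hei.1
      have hexy : e = x ∨ e = y := by simpa using hei.2
      have hnotin : ∀ u : Fin (n+1), u ≠ e → (u = a ∨ u = b) → u ∉ ({x, y} : Finset (Fin (n+1))) := by
        intro u hue hu hmem'
        apply hue
        have : u ∈ ({a, b} ∩ {x, y} : Finset (Fin (n+1))) := by
          rw [Finset.mem_inter]
          refine ⟨?_, hmem'⟩
          simpa using hu
        rw [he] at this
        simpa using this
      rcases heab with rfl | rfl
      · have hbxy := hnotin b (Ne.symm hab) (Or.inr rfl)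
        simp only [Finset.mem_insert, Finset.mem_singleton] at hbxy
        push_neg at hbxy
        refine ⟨⟨(e, b), ?_⟩, Finset.mem_attach _ _, rfl⟩
        rw [hD, Finset.mem_product]
        constructor
        · simpa using hexy
        · simp only [Finset.mem_sdiff, Finset.mem_univ, true_and, Finset.mem_insert,
            Finset.mem_singleton]
          push_neg
          exact ⟨hbxy.1, hbxy.2, hb⟩
      · have haxy := hnotin a hab (Or.inl rfl)
        simp only [Finset.mem_insert, Finset.mem_singleton] at haxy
        push_neg at haxy
        refine ⟨⟨(e, a), ?_⟩, Finset.mem_attach _ _, (mkT_comm a e hab).symm⟩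
        rw [hD, Finset.mem_product]
        constructor
        · simpa using hexy
        · simp only [Finset.mem_sdiff, Finset.mem_univ, true_and, Finset.mem_insert,
            Finset.mem_singleton]
          push_neg
          exact ⟨haxy.1, haxy.2, ha⟩
    · intro p _
      have h12 := hne p.1 p.2
      have hwne : Equiv.swap p.1.1 p.1.2 x ≠ Equiv.swap p.1.1 p.1.2 y :=
        fun he => hxy ((Equiv.swap p.1.1 p.1.2).injective he)
      rw [E_of_ne h12, E_of_ne hwne, hs, wedge_mk]
  rw [← hbij]
  rw [Finset.sum_attach D (fun p => (((RatFunc.X : K)/2) •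
        (E p.1 p.2 + Finsupp.single s 1
          - E (Equiv.swap p.1 p.2 x) (Equiv.swap p.1 p.2 y)) : Tr n →₀ K))]
  rw [hD, Finset.sum_product, Finset.sum_insert (by simpa using hxy), Finset.sum_singleton,
    ← Finset.sum_add_distrib]
  have hterm : ∀ c ∈ Finset.univ \ ({x, y, L} : Finset (Fin (n+1))),
      (((RatFunc.X : K)/2) • (E x c + Finsupp.single s 1
          - E (Equiv.swap x c x) (Equiv.swap x c y))
        + ((RatFunc.X : K)/2) • (E y c + Finsupp.single s 1
          - E (Equiv.swap y c x) (Equiv.swap y c y)) : Tr n →₀ K)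
      = (RatFunc.X : K) • Finsupp.single s 1 := by
    intro c hc
    have hcmem : c ≠ x ∧ c ≠ y ∧ c ≠ L := by
      simp only [Finset.mem_sdiff, Finset.mem_univ, true_and, Finset.mem_insert,
        Finset.mem_singleton] at hc
      push_neg at hc
      exact hc
    have e1 : Equiv.swap x c x = c := Equiv.swap_apply_left x c
    have e2 : Equiv.swap x c y = y :=
      Equiv.swap_apply_of_ne_of_ne (Ne.symm hxy) (Ne.symm hcmem.2.1)
    have e3 : Equiv.swap y c x = x :=
      Equiv.swap_apply_of_ne_of_ne hxy (Ne.symm hcmem.1)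
    have e4 : Equiv.swap y c y = c := Equiv.swap_apply_left y c
    rw [e1, e2, e3, e4, E_comm y c, ← smul_add]
    have hinner : (E x c + Finsupp.single s 1 - E c y) + (E c y + Finsupp.single s 1 - E x c)
        = (2 : K) • (Finsupp.single s 1 : Tr n →₀ K) := by
      rw [two_smul]; abel
    rw [hinner, smul_smul, div_mul_cancel₀ _ (by norm_num : (2 : K) ≠ 0)]
  rw [Finset.sum_congr rfl hterm, Finset.sum_const]
  have hcard : (Finset.univ \ ({x, y, L} : Finset (Fin (n+1)))).card = n - 2 := by
    rw [Finset.card_sdiff_of_subset (Finset.subset_univ _)]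
    have : ({x, y, L} : Finset (Fin (n+1))).card = 3 := by
      rw [Finset.card_insert_of_notMem (by simp [hxy, hx]),
        Finset.card_insert_of_notMem (by simp [hy]), Finset.card_singleton]
    rw [this]
    simp
  rw [hcard, ← Nat.cast_smul_eq_nsmul K, Nat.cast_sub hn]
  push_cast
  rw [smul_smul, add_smul, one_smul, mul_comm]


lemma cc_ne (n : ℕ) : (1 + RatFunc.X * ((n : K) - 2)) ≠ 0 := by
  intro h
  have h2 : algebraMap (Polynomial ℚ) (RatFunc ℚ)
      (1 + Polynomial.X * ((n : Polynomial ℚ) - 2)) = algebraMap (Polynomial ℚ) (RatFunc ℚ) 0 := by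
    rw [map_zero, map_add, map_one, map_mul, map_sub, RatFunc.algebraMap_X, map_natCast]
    rw [show ((algebraMap (Polynomial ℚ) (RatFunc ℚ)) 2 : RatFunc ℚ) = 2 from map_ofNat _ 2]
    exact h
  have h3 := RatFunc.algebraMap_injective ℚ h2
  have h4 := congrArg (fun p => Polynomial.coeff p 0) h3
  simp [Polynomial.coeff_add, Polynomial.mul_coeff_zero] at h4

lemma ne2 (n : ℕ) : (1 + RatFunc.X * ((n : K) - 2)) * 2 ≠ RatFunc.X * (n : K) := by
  intro h
  have h2 : algebraMap (Polynomial ℚ) (RatFunc ℚ)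
      ((1 + Polynomial.X * ((n : Polynomial ℚ) - 2)) * 2)
      = algebraMap (Polynomial ℚ) (RatFunc ℚ) (Polynomial.X * (n : Polynomial ℚ)) := by
    rw [map_mul, map_mul, map_add, map_one, map_mul, map_sub, RatFunc.algebraMap_X,
      map_natCast]
    rw [show ((algebraMap (Polynomial ℚ) (RatFunc ℚ)) 2 : RatFunc ℚ) = 2 from map_ofNat _ 2]
    exact h
  have h3 := RatFunc.algebraMap_injective ℚ h2
  have h4 := congrArg (fun p => Polynomial.coeff p 0) h3
  simp [Polynomial.coeff_add, Polynomial.mul_coeff_zero] at h4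

lemma matsuo_single_single (t s : Tr n) :
    matsuoMul K n RatFunc.X (Finsupp.single t 1) (Finsupp.single s 1)
      = pointMul K RatFunc.X t s := by
  rw [matsuoMul, Finsupp.lsum_single, LinearMap.toSpanSingleton_apply_one, Finsupp.lsum_single,
    LinearMap.toSpanSingleton_apply_one]

lemma matsuo_single (s : Tr n) :
    matsuoMul K n RatFunc.X (idParab n) (Finsupp.single s 1) =
      (1 + RatFunc.X * ((n : K) - 2))⁻¹ • ∑ t ∈ Pfin n, pointMul K RatFunc.X t s := by
  have hid : idParab n = (1 + RatFunc.X * ((n : K) - 2))⁻¹ •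
      ∑ t ∈ Pfin n, Finsupp.single t (1 : K) := rfl
  rw [hid, map_smul, map_sum, LinearMap.smul_apply, LinearMap.sum_apply]
  congr 1
  exact Finset.sum_congr rfl fun t _ => matsuo_single_single t s

lemma A_single_inP (hn : 2 ≤ n) {s : Tr n} (hs : s.1 (Fin.last n) = Fin.last n) :
    matsuoMul K n RatFunc.X (idParab n) (Finsupp.single s 1) = Finsupp.single s 1 := by
  obtain ⟨x, y, hxy, rfl⟩ := exists_mk s
  obtain ⟨hx, hy⟩ := (fix_iff hxy).1 hs
  rw [matsuo_single, sumP_inP hn hxy hx hy, smul_smul,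
    inv_mul_cancel₀ (cc_ne n), one_smul]

lemma A_single_notP (hn : 1 ≤ n) {x : Fin (n+1)} (hx : x ≠ L) :
    matsuoMul K n RatFunc.X (idParab n) (Finsupp.single (mkT x L hx) 1) =
      ((1 + RatFunc.X * ((n : K) - 2))⁻¹ * ((RatFunc.X : K)/2)) •
        (Rr x + (n : K) • Finsupp.single (mkT x L hx) 1 - Vv n) := by
  rw [matsuo_single, sumP_notP hn hx, smul_smul]

lemma A_fix {v : Tr n →₀ K} (hn : 2 ≤ n)
    (hv : v ∈ Submodule.span K ((fun t : Tr n => Finsupp.single t (1 : K)) ''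
      {t : Tr n | t.1 (Fin.last n) = Fin.last n})) :
    matsuoMul K n RatFunc.X (idParab n) v = v := by
  induction hv using Submodule.span_induction with
  | mem x h =>
    obtain ⟨t, ht, rfl⟩ := h
    exact A_single_inP hn ht
  | zero => exact map_zero _
  | add x y _ _ hx hy => rw [map_add, hx, hy]
  | smul a x _ hx => rw [map_smul, hx]

lemma eq_sum_single_univ (f : Tr n →₀ K) : f = ∑ s : Tr n, Finsupp.single s (f s) := by
  ext t
  rw [Finsupp.finset_sum_apply]
  simp [Finsupp.single_apply]


noncomputable def xq (f : Tr n →₀ K) (a : Fin (n+1)) : K :=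
  if h : a = L then 0 else f (mkT a L h)

lemma single_mk_apply_mk {a b : Fin (n+1)} (ha : a ≠ L) (hb : b ≠ L) :
    (Finsupp.single (mkT a L ha) (1:K)) (mkT b L hb) = if a = b then 1 else 0 := by
  rw [Finsupp.single_apply]
  by_cases hab : a = b
  · subst hab
    rw [if_pos rfl, if_pos rfl]
  · rw [if_neg, if_neg hab]
    intro he
    rcases (mkT_eq_iff _ _).1 he with ⟨h1, -⟩ | ⟨h1, -⟩
    · exact hab h1
    · exact ha h1

lemma Vv_apply_mk {b : Fin (n+1)} (hb : b ≠ L) : (Vv n) (mkT b L hb) = 1 := by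
  rw [Vv, Finsupp.finset_sum_apply]
  have h1 : ∀ u ∈ (Finset.univ : Finset (Fin (n+1))),
      (E u L) (mkT b L hb) = if u = b then 1 else 0 := by
    intro u _
    rcases eq_or_ne u L with rfl | hu
    · rw [E_self, if_neg (Ne.symm hb)]; rfl
    · rw [E_of_ne hu, single_mk_apply_mk hu hb]
  rw [Finset.sum_congr rfl h1, Finset.sum_ite_eq' Finset.univ b]
  simp

lemma Rr_apply_mk {a b : Fin (n+1)} (ha : a ≠ L) (hb : b ≠ L) :
    (Rr a) (mkT b L hb) = 0 := by
  rw [Rr, Finsupp.finset_sum_apply]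
  apply Finset.sum_eq_zero
  intro c _
  rw [apply_ite (fun g : Tr n →₀ K => g (mkT b L hb))]
  rcases eq_or_ne c L with rfl | hc
  · rw [if_pos rfl]; rfl
  · rw [if_neg hc]
    rcases eq_or_ne a c with rfl | hac
    · rw [E_self]; rfl
    · rw [E_of_ne hac, Finsupp.single_apply, if_neg, ]
      intro he
      rcases (mkT_eq_iff _ _).1 he with ⟨-, h2⟩ | ⟨h2, -⟩
      · exact hc h2
      · exact ha h2

lemma coordA_notP (hn : 1 ≤ n) {a b : Fin (n+1)} (ha : a ≠ L) (hb : b ≠ L) :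
    (matsuoMul K n RatFunc.X (idParab n) (Finsupp.single (mkT a L ha) 1)) (mkT b L hb) =
      ((1 + RatFunc.X * ((n : K) - 2))⁻¹ * ((RatFunc.X : K)/2)) *
        ((n : K) * (if a = b then 1 else 0) - 1) := by
  rw [A_single_notP hn ha, Finsupp.smul_apply, Finsupp.sub_apply, Finsupp.add_apply,
    Finsupp.smul_apply, Rr_apply_mk ha hb, Vv_apply_mk hb, single_mk_apply_mk ha hb,
    zero_add, smul_eq_mul, smul_eq_mul]

lemma coordA_inP {s : Tr n} (hn : 2 ≤ n) (hs : s.1 (Fin.last n) = Fin.last n)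
    {b : Fin (n+1)} (hb : b ≠ L) :
    (matsuoMul K n RatFunc.X (idParab n) (Finsupp.single s 1)) (mkT b L hb) = 0 := by
  rw [A_single_inP hn hs, Finsupp.single_apply, if_neg]
  intro he
  rw [he] at hs
  exact ((fix_iff hb).1 hs).2 rfl

lemma QL (hn : 2 ≤ n) (f : Tr n →₀ K) {b : Fin (n+1)} (hb : b ≠ L) :
    (matsuoMul K n RatFunc.X (idParab n) f) (mkT b L hb) =
      ((1 + RatFunc.X * ((n : K) - 2))⁻¹ * ((RatFunc.X : K)/2)) *
        ((n : K) * xq f b - ∑ a : Fin (n+1), xq f a) := by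
  set q : Tr n := mkT b L hb with hq
  set k : K := (1 + RatFunc.X * ((n : K) - 2))⁻¹ * ((RatFunc.X : K)/2) with hk
  conv_lhs => rw [eq_sum_single_univ f]
  rw [map_sum, Finsupp.finset_sum_apply]
  have hterm : ∀ s ∈ (Finset.univ : Finset (Tr n)),
      (matsuoMul K n RatFunc.X (idParab n) (Finsupp.single s (f s))) q
        = f s * (matsuoMul K n RatFunc.X (idParab n) (Finsupp.single s 1)) q := by
    intro s _
    rw [show Finsupp.single s (f s) = f s • Finsupp.single s (1:K) from by
      rw [Finsupp.smul_single, smul_eq_mul, mul_one], map_smul, Finsupp.smul_apply,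
      smul_eq_mul]
  rw [Finset.sum_congr rfl hterm,
    ← Finset.sum_filter_add_sum_filter_not Finset.univ
      (fun s : Tr n => s.1 (Fin.last n) = Fin.last n)]
  have hzero : ∑ s ∈ Finset.univ.filter (fun s : Tr n => s.1 (Fin.last n) = Fin.last n),
      f s * (matsuoMul K n RatFunc.X (idParab n) (Finsupp.single s 1)) q = 0 := by
    apply Finset.sum_eq_zero
    intro s hs
    rw [coordA_inP hn (Finset.mem_filter.1 hs).2 hb, mul_zero]
  rw [hzero, zero_add]
  have hbij : ∑ s ∈ Finset.univ.filter (fun s : Tr n => ¬s.1 (Fin.last n) = Fin.last n),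
      f s * (matsuoMul K n RatFunc.X (idParab n) (Finsupp.single s 1)) q
      = ∑ a ∈ Finset.univ.filter (fun a : Fin (n+1) => a ≠ L),
        xq f a * (k * ((n : K) * (if a = b then 1 else 0) - 1)) := by
    refine (Finset.sum_bij (fun a ha => mkT a L (Finset.mem_filter.1 ha).2) ?_ ?_ ?_ ?_).symm
    · intro a ha
      rw [Finset.mem_filter]
      refine ⟨Finset.mem_univ _, ?_⟩
      rw [fix_iff]
      push_neg
      intro _
      rfl
    · intro a ha a' ha' he
      rcases (mkT_eq_iff _ _).1 he with ⟨h1, -⟩ | ⟨h1, -⟩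
      · exact h1
      · exact absurd h1 (Finset.mem_filter.1 ha).2
    · intro s hs
      obtain ⟨u, v, huv, rfl⟩ := exists_mk s
      have hnot := (Finset.mem_filter.1 hs).2
      rw [fix_iff] at hnot
      push_neg at hnot
      rcases eq_or_ne u L with rfl | hu
      · have hv : v ≠ L := Ne.symm huv
        refine ⟨v, Finset.mem_filter.2 ⟨Finset.mem_univ _, hv⟩, ?_⟩
        exact (mkT_comm _ _ huv).symm
      · have hv : v = L := hnot hu
        subst hv
        exact ⟨u, Finset.mem_filter.2 ⟨Finset.mem_univ _, hu⟩, rfl⟩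
    · intro a ha
      have haL := (Finset.mem_filter.1 ha).2
      rw [xq, dif_neg haL, coordA_notP (by omega : 1 ≤ n) haL hb, ← hk]
  rw [hbij]
  rw [Finset.sum_subset (Finset.filter_subset _ _) (by
    intro a _ ha
    have : a = L := by
      by_contra h
      exact ha (Finset.mem_filter.2 ⟨Finset.mem_univ _, h⟩)
    rw [this, xq, dif_pos rfl, zero_mul])]
  have hsplit : ∀ a ∈ (Finset.univ : Finset (Fin (n+1))),
      xq f a * (k * ((n : K) * (if a = b then 1 else 0) - 1))
        = (if a = b then k * (n : K) * xq f a else 0) - k * xq f a := by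
    intro a _
    split_ifs <;> ring
  rw [Finset.sum_congr rfl hsplit, Finset.sum_sub_distrib, Finset.sum_ite_eq' Finset.univ b,
    if_pos (Finset.mem_univ b), ← Finset.mul_sum]
  ring


lemma classify_notP {s : Tr n} (hs : ¬ s.1 (Fin.last n) = Fin.last n) :
    ∃ (a : Fin (n+1)) (ha : a ≠ L), s = mkT a L ha := by
  obtain ⟨u, v, huv, rfl⟩ := exists_mk s
  rw [fix_iff] at hs
  push_neg at hs
  rcases eq_or_ne u L with rfl | hu
  · exact ⟨v, Ne.symm huv, mkT_comm _ _ huv⟩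
  · have hv := hs hu
    subst hv
    exact ⟨u, hu, rfl⟩

lemma xq_L (f : Tr n →₀ K) : xq f L = 0 := dif_pos rfl

lemma sum_xq_filter (f : Tr n →₀ K) :
    ∑ a ∈ Finset.univ.filter (fun a : Fin (n+1) => a ≠ L), xq f a
      = ∑ a : Fin (n+1), xq f a := by
  apply Finset.sum_subset (Finset.filter_subset _ _)
  intro a _ ha
  have haL : a = L := by
    by_contra h
    exact ha (Finset.mem_filter.2 ⟨Finset.mem_univ _, h⟩)
  rw [haL, xq_L]

lemma card_filter_ne_L : (Finset.univ.filter (fun a : Fin (n+1) => a ≠ L)).card = n := by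
  rw [Finset.filter_ne', Finset.card_erase_of_mem (Finset.mem_univ _), Finset.card_univ,
    Fintype.card_fin]
  rfl

lemma part1 (hn : 3 ≤ n) :
    Module.End.eigenspace (matsuoMul K n RatFunc.X (idParab n)) 1 =
      Submodule.span K ((fun t : Tr n => Finsupp.single t (1 : K)) ''
        {t : Tr n | t.1 (Fin.last n) = Fin.last n}) := by
  apply le_antisymm
  · intro f hf
    rw [Module.End.mem_eigenspace_iff, one_smul] at hf
    have heq : ∀ (b : Fin (n+1)), b ≠ L →
        xq f b = ((1 + RatFunc.X * ((n : K) - 2))⁻¹ * ((RatFunc.X : K)/2)) *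
          ((n : K) * xq f b - ∑ a : Fin (n+1), xq f a) := by
      intro b hb
      have h0 := QL (by omega : 2 ≤ n) f hb
      rw [hf] at h0
      have hxb : xq f b = f (mkT b L hb) := dif_neg hb
      rw [← hxb] at h0
      exact h0
    have hSzero : (∑ a : Fin (n+1), xq f a) = 0 := by
      have h2 : (∑ a : Fin (n+1), xq f a)
          = ((1 + RatFunc.X * ((n : K) - 2))⁻¹ * ((RatFunc.X : K)/2)) *
            ((n : K) * (∑ a : Fin (n+1), xq f a) - (n : K) * (∑ a : Fin (n+1), xq f a)) := by
        calc (∑ a : Fin (n+1), xq f a)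
            = ∑ a ∈ Finset.univ.filter (fun a : Fin (n+1) => a ≠ L), xq f a :=
              (sum_xq_filter f).symm
          _ = ∑ a ∈ Finset.univ.filter (fun a : Fin (n+1) => a ≠ L),
                ((1 + RatFunc.X * ((n : K) - 2))⁻¹ * ((RatFunc.X : K)/2)) *
                  ((n : K) * xq f a - ∑ a : Fin (n+1), xq f a) :=
              Finset.sum_congr rfl fun a ha => heq a (Finset.mem_filter.1 ha).2
          _ = _ := by
              rw [← Finset.mul_sum, Finset.sum_sub_distrib, ← Finset.mul_sum, sum_xq_filter,
                Finset.sum_const, card_filter_ne_L, nsmul_eq_mul]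
      rwa [sub_self, mul_zero] at h2
    have hx0 : ∀ (b : Fin (n+1)), b ≠ L → xq f b = 0 := by
      intro b hb
      have h4 := heq b hb
      rw [hSzero, sub_zero] at h4
      by_contra hne
      have h5 : xq f b * 1 = xq f b *
          (((1 + RatFunc.X * ((n : K) - 2))⁻¹ * ((RatFunc.X : K)/2)) * (n : K)) := by
        linear_combination h4
      have h6 := mul_left_cancel₀ hne h5
      apply ne2 n
      have hcc := cc_ne n
      calc (1 + RatFunc.X * ((n : K) - 2)) * 2
          = ((1 + RatFunc.X * ((n : K) - 2)) * 2) * 1 := by ring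
        _ = ((1 + RatFunc.X * ((n : K) - 2)) * 2) *
            (((1 + RatFunc.X * ((n : K) - 2))⁻¹ * ((RatFunc.X : K)/2)) * (n : K)) := by
              rw [← h6]
        _ = RatFunc.X * (n : K) := by
              field_simp
    rw [← Finsupp.supported_eq_span_single, Finsupp.mem_supported']
    intro t ht
    have htL : ¬ t.1 (Fin.last n) = Fin.last n := ht
    obtain ⟨a, ha, rfl⟩ := classify_notP htL
    have h7 := hx0 a ha
    rwa [xq, dif_neg ha] at h7
  · rw [Submodule.span_le]
    rintro v ⟨t, ht, rfl⟩
    rw [SetLike.mem_coe, Module.End.mem_eigenspace_iff, one_smul]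
    exact A_single_inP (by omega) ht


noncomputable def Hh (a c : Fin (n+1)) : Tr n →₀ K :=
  if a = L ∨ c = L then 0 else E a c

lemma Hh_symm (a c : Fin (n+1)) : Hh a c = Hh c a := by
  unfold Hh
  by_cases h : a = L ∨ c = L
  · rw [if_pos h, if_pos (Or.symm h)]
  · rw [if_neg h, if_neg (fun h' => h (Or.symm h')), E_comm]

lemma sumD : ∑ a ∈ Finset.univ.filter (fun a : Fin (n+1) => a ≠ L), Rr a
    = ww n + ww n := by
  have h1 : ∑ a ∈ Finset.univ.filter (fun a : Fin (n+1) => a ≠ L), Rr a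
      = ∑ a : Fin (n+1), ∑ c : Fin (n+1), Hh a c := by
    rw [Finset.sum_filter]
    apply Finset.sum_congr rfl
    intro a _
    by_cases ha : a = L
    · rw [if_neg (by simpa using ha)]
      symm
      apply Finset.sum_eq_zero
      intro c _
      exact if_pos (Or.inl ha)
    · rw [if_pos ha, Rr]
      apply Finset.sum_congr rfl
      intro c _
      by_cases hc : c = L
      · rw [if_pos hc, Hh, if_pos (Or.inr hc)]
      · rw [if_neg hc, Hh, if_neg (by tauto)]
  rw [h1, ← Finset.sum_product']
  have h2 : ∑ p ∈ (Finset.univ ×ˢ Finset.univ : Finset (Fin (n+1) × Fin (n+1))), Hh p.1 p.2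
      = ∑ p ∈ (Finset.univ ×ˢ Finset.univ : Finset (Fin (n+1) × Fin (n+1))).filter
          (fun p => p.1 ≠ L ∧ p.2 ≠ L ∧ p.1 ≠ p.2), Hh p.1 p.2 := by
    symm
    apply Finset.sum_subset (Finset.filter_subset _ _)
    intro p hp hnp
    have hc : ¬(p.1 ≠ L ∧ p.2 ≠ L ∧ p.1 ≠ p.2) :=
      fun hc => hnp (Finset.mem_filter.2 ⟨hp, hc⟩)
    push_neg at hc
    by_cases h1' : p.1 = L
    · exact if_pos (Or.inl h1')
    · by_cases h2' : p.2 = L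
      · exact if_pos (Or.inr h2')
      · have heq := hc h1' h2'
        rw [Hh, if_neg (by tauto), heq, E_self]
  rw [h2, ← Finset.sum_filter_add_sum_filter_not
    ((Finset.univ ×ˢ Finset.univ : Finset (Fin (n+1) × Fin (n+1))).filter
      (fun p => p.1 ≠ L ∧ p.2 ≠ L ∧ p.1 ≠ p.2)) (fun p => p.1 < p.2)]
  have h3 : ∑ p ∈ ((Finset.univ ×ˢ Finset.univ : Finset (Fin (n+1) × Fin (n+1))).filter
        (fun p => p.1 ≠ L ∧ p.2 ≠ L ∧ p.1 ≠ p.2)).filter (fun p => ¬p.1 < p.2), Hh p.1 p.2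
      = ∑ p ∈ ((Finset.univ ×ˢ Finset.univ : Finset (Fin (n+1) × Fin (n+1))).filter
        (fun p => p.1 ≠ L ∧ p.2 ≠ L ∧ p.1 ≠ p.2)).filter (fun p => p.1 < p.2), Hh p.1 p.2 := by
    apply Finset.sum_nbij' Prod.swap Prod.swap
    · intro p hp
      simp only [Finset.mem_filter, Finset.mem_product] at hp ⊢
      obtain ⟨⟨-, h1', h2', h3'⟩, h4'⟩ := hp
      refine ⟨⟨⟨Finset.mem_univ _, Finset.mem_univ _⟩, h2', h1', Ne.symm h3'⟩, ?_⟩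
      exact lt_of_le_of_ne (not_lt.1 h4') (Ne.symm h3')
    · intro p hp
      simp only [Finset.mem_filter, Finset.mem_product] at hp ⊢
      obtain ⟨⟨-, h1', h2', h3'⟩, h4'⟩ := hp
      exact ⟨⟨⟨Finset.mem_univ _, Finset.mem_univ _⟩, h2', h1', Ne.symm h3'⟩, not_lt.2 (le_of_lt h4')⟩
    · intro p _; rfl
    · intro p _; rfl
    · intro p _; exact Hh_symm p.1 p.2
  rw [h3]
  have h4 : ∑ p ∈ ((Finset.univ ×ˢ Finset.univ : Finset (Fin (n+1) × Fin (n+1))).filter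
        (fun p => p.1 ≠ L ∧ p.2 ≠ L ∧ p.1 ≠ p.2)).filter (fun p => p.1 < p.2), Hh p.1 p.2
      = ww n := by
    rw [ww]
    refine Finset.sum_bij (fun p hp => mkT p.1 p.2 ?_) ?_ ?_ ?_ ?_
    · simp only [Finset.mem_filter, Finset.mem_product] at hp
      exact hp.1.2.2.2
    · intro p hp
      simp only [Finset.mem_filter, Finset.mem_product] at hp
      exact (mem_Pfin _).2 ⟨hp.1.2.1, hp.1.2.2.1⟩
    · intro p hp q hq he
      simp only [Finset.mem_filter, Finset.mem_product] at hp hq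
      rcases (mkT_eq_iff _ _).1 he with ⟨e1, e2⟩ | ⟨e1, e2⟩
      · exact Prod.ext e1 e2
      · exfalso
        have := hp.2
        rw [e1, e2] at this
        exact absurd hq.2 (asymm this)
    · intro t ht
      obtain ⟨a, b, hab, rfl⟩ := exists_mk t
      obtain ⟨ha, hb⟩ := (mem_Pfin hab).1 ht
      rcases lt_or_gt_of_ne hab with hlt | hgt
      · refine ⟨(a, b), ?_, rfl⟩
        simp only [Finset.mem_filter, Finset.mem_product]
        exact ⟨⟨⟨Finset.mem_univ _, Finset.mem_univ _⟩, ha, hb, hab⟩, hlt⟩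
      · refine ⟨(b, a), ?_, (mkT_comm _ _ hab).symm⟩
        simp only [Finset.mem_filter, Finset.mem_product]
        exact ⟨⟨⟨Finset.mem_univ _, Finset.mem_univ _⟩, hb, ha, Ne.symm hab⟩, hgt⟩
    · intro p hp
      simp only [Finset.mem_filter, Finset.mem_product] at hp
      rw [Hh, if_neg (by tauto), E_of_ne hp.1.2.2.2]
  rw [h4]

lemma sumE_filter : ∑ a ∈ Finset.univ.filter (fun a : Fin (n+1) => a ≠ L), E a L = Vv n := by
  rw [Vv]
  apply Finset.sum_subset (Finset.filter_subset _ _)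
  intro a _ ha
  have haL : a = L := by
    by_contra h
    exact ha (Finset.mem_filter.2 ⟨Finset.mem_univ _, h⟩)
  rw [haL, E_self]

lemma ww_mem : ww n ∈ Submodule.span K ((fun t : Tr n => Finsupp.single t (1 : K)) ''
    {t : Tr n | t.1 (Fin.last n) = Fin.last n}) := by
  rw [ww]
  apply Submodule.sum_mem
  intro t ht
  exact Submodule.subset_span ⟨t, (Finset.mem_filter.1 ht).2, rfl⟩

lemma Aww (hn : 2 ≤ n) : matsuoMul K n RatFunc.X (idParab n) (ww n) = ww n :=
  A_fix hn ww_mem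

lemma AV (hn : 2 ≤ n) :
    matsuoMul K n RatFunc.X (idParab n) (Vv n) =
      ((1 + RatFunc.X * ((n : K) - 2))⁻¹ * RatFunc.X) • ww n := by
  rw [Vv, map_sum]
  have h1 : ∑ a : Fin (n+1), matsuoMul K n RatFunc.X (idParab n) (E a L)
      = ∑ a ∈ Finset.univ.filter (fun a : Fin (n+1) => a ≠ L),
          ((1 + RatFunc.X * ((n : K) - 2))⁻¹ * ((RatFunc.X : K)/2)) •
            (Rr a + (n : K) • E a L - Vv n) := by
    rw [← Finset.sum_subset (Finset.filter_subset
      (fun a : Fin (n+1) => a ≠ L) Finset.univ) (by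
        intro a _ ha
        have haL : a = L := by
          by_contra h
          exact ha (Finset.mem_filter.2 ⟨Finset.mem_univ _, h⟩)
        rw [haL, E_self, map_zero])]
    apply Finset.sum_congr rfl
    intro a ha
    have haL := (Finset.mem_filter.1 ha).2
    rw [E_of_ne haL, A_single_notP (by omega : 1 ≤ n) haL, ← E_of_ne haL]
  rw [h1, ← Finset.smul_sum, Finset.sum_sub_distrib, Finset.sum_add_distrib, sumD,
    ← Finset.smul_sum, sumE_filter, Finset.sum_const, card_filter_ne_L,
    ← Nat.cast_smul_eq_nsmul K]
  rw [add_sub_cancel_right, smul_add, ← add_smul]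
  congr 1
  rw [← mul_add, add_halves]


lemma ww_apply_mk {b : Fin (n+1)} (hb : b ≠ L) : (ww n) (mkT b L hb) = 0 := by
  rw [ww, Finsupp.finset_sum_apply]
  apply Finset.sum_eq_zero
  intro t ht
  rw [Finsupp.single_apply, if_neg]
  intro he
  have := (Finset.mem_filter.1 ht).2
  rw [he] at this
  exact ((fix_iff hb).1 this).2 rfl

lemma kX_ne : ((1 + RatFunc.X * ((n : K) - 2))⁻¹ * ((RatFunc.X : K)/2)) ≠ 0 :=
  mul_ne_zero (inv_ne_zero (cc_ne n))
    (div_ne_zero RatFunc.X_ne_zero (by norm_num : (2 : K) ≠ 0))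

lemma part2 (hn : 3 ≤ n) :
    Module.finrank K
      (Module.End.eigenspace (matsuoMul K n RatFunc.X (idParab n)) 0) = 1 := by
  have h0L : (0 : Fin (n+1)) ≠ L := by
    intro h
    have h' : (0 : ℕ) = n := by simpa using congrArg Fin.val h
    omega
  have hz1 : ∀ (b : Fin (n+1)) (hb : b ≠ L),
      (Vv n - (RatFunc.X * (1 + RatFunc.X * ((n : K) - 2))⁻¹) • ww n) (mkT b L hb) = 1 := by
    intro b hb
    rw [Finsupp.sub_apply, Finsupp.smul_apply, Vv_apply_mk hb, ww_apply_mk hb,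
      smul_zero, sub_zero]
  have hzne : (Vv n - (RatFunc.X * (1 + RatFunc.X * ((n : K) - 2))⁻¹) • ww n) ≠ 0 := by
    intro h
    have h1 := hz1 0 h0L
    rw [h] at h1
    simp at h1
  have hAz : matsuoMul K n RatFunc.X (idParab n)
      (Vv n - (RatFunc.X * (1 + RatFunc.X * ((n : K) - 2))⁻¹) • ww n) = 0 := by
    rw [map_sub, map_smul, AV (by omega), Aww (by omega),
      mul_comm (RatFunc.X : K) (1 + RatFunc.X * ((n : K) - 2))⁻¹, sub_self]
  have hker : LinearMap.ker (matsuoMul K n RatFunc.X (idParab n)) =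
      Submodule.span K {Vv n - (RatFunc.X * (1 + RatFunc.X * ((n : K) - 2))⁻¹) • ww n} := by
    apply le_antisymm
    · intro f hf
      rw [LinearMap.mem_ker] at hf
      have hxq : ∀ (b : Fin (n+1)), b ≠ L →
          xq f b * (n : K) = ∑ a : Fin (n+1), xq f a := by
        intro b hb
        have h0 := QL (by omega : 2 ≤ n) f hb
        rw [hf] at h0
        have h2 : (0 : K) = ((1 + RatFunc.X * ((n : K) - 2))⁻¹ * ((RatFunc.X : K)/2)) *
            ((n : K) * xq f b - ∑ a : Fin (n+1), xq f a) := by simpa using h0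
        rcases mul_eq_zero.1 h2.symm with h | h
        · exact absurd h kX_ne
        · linear_combination h
      have hnK : (n : K) ≠ 0 := Nat.cast_ne_zero.2 (by omega)
      rw [Submodule.mem_span_singleton]
      refine ⟨(∑ a : Fin (n+1), xq f a) / (n : K), ?_⟩
      have hf'P : f - ((∑ a : Fin (n+1), xq f a) / (n : K)) •
          (Vv n - (RatFunc.X * (1 + RatFunc.X * ((n : K) - 2))⁻¹) • ww n)
          ∈ Submodule.span K ((fun t : Tr n => Finsupp.single t (1 : K)) ''
            {t : Tr n | t.1 (Fin.last n) = Fin.last n}) := by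
        rw [← Finsupp.supported_eq_span_single, Finsupp.mem_supported']
        intro t ht
        have htL : ¬ t.1 (Fin.last n) = Fin.last n := ht
        obtain ⟨b, hb, rfl⟩ := classify_notP htL
        rw [Finsupp.sub_apply, Finsupp.smul_apply, hz1 b hb, smul_eq_mul, mul_one]
        have hfb : xq f b = f (mkT b L hb) := dif_neg hb
        rw [← hfb, sub_eq_zero, eq_div_iff hnK]
        exact hxq b hb
      have h3 := A_fix (by omega : 2 ≤ n) hf'P
      rw [map_sub, hf, map_smul, hAz, smul_zero, sub_zero] at h3
      have h4 : f - ((∑ a : Fin (n+1), xq f a) / (n : K)) •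
          (Vv n - (RatFunc.X * (1 + RatFunc.X * ((n : K) - 2))⁻¹) • ww n) = 0 := h3.symm
      rw [sub_eq_zero] at h4
      exact h4.symm
    · rw [Submodule.span_le, Set.singleton_subset_iff]
      exact LinearMap.mem_ker.2 hAz
  rw [Module.End.eigenspace_zero, hker]
  exact finrank_span_singleton hzne

end MAux

/-- for `n ≥ 3`, over `F = ℚ(α)` the `1`-eigenspace of `ad(u)` on
`M_α(𝒜_n)`, for `u` the identity of the parabolic subalgebra spanned by `T_{n-1}`, is
exactly the span of `T_{n-1}`, and the `0`-eigenspace is `1`-dimensional. -/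
theorem eigenspaces_idParab_An (n : ℕ) (hn : 3 ≤ n) :
    Module.End.eigenspace (matsuoMul (RatFunc ℚ) n RatFunc.X (idParab n)) 1 =
        Submodule.span (RatFunc ℚ)
          ((fun t : Tr n => Finsupp.single t (1 : RatFunc ℚ)) ''
            {t : Tr n | t.1 (Fin.last n) = Fin.last n}) ∧
      Module.finrank (RatFunc ℚ)
          (Module.End.eigenspace (matsuoMul (RatFunc ℚ) n RatFunc.X (idParab n)) 0) =
        1 := by
  exact ⟨MAux.part1 hn, MAux.part2 hn⟩
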